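/- The augmented propagation matrix Â = (D + I)^{-1/2}(A + I)(D + I)^{-1/2} used in GCN layers is symmetric, and all its eigenvalues lie in the interval (-1, 1]. -/

import Mathlib

open Matrix BigOperators

theorem gcn_propagation_matrix_spectrum (n : ℕ)
    (A : Matrix (Fin n) (Fin n) ℝ)
    (hsym : A.IsSymm) (h01 : ∀ i j, A i j = 0 ∨ A i j = 1)
    (hdiag : ∀ i, A i i = 0)
    (Ahat : Matrix (Fin n) (Fin n) ℝ)
    (hAhat : Ahat = Matrix.diagonal (fun i => 1 / Real.sqrt ((∑ j, A i j) + 1)) *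
      (A + 1) * Matrix.diagonal (fun i => 1 / Real.sqrt ((∑ j, A i j) + 1))) :
    Ahat.IsSymm ∧
    ∀ (mu : ℝ) (x : Fin n → ℝ), x ≠ 0 → Ahat.mulVec x = mu • x →
      -1 < mu ∧ mu ≤ 1 := by
  have hA0 : ∀ i j, 0 ≤ A i j := fun i j => by rcases h01 i j with h | h <;> simp [h]
  have hAsym : ∀ i j, A j i = A i j := fun i j => by
    have := congrFun (congrFun hsym i) j
    simpa [Matrix.transpose_apply] using this
  set d : Fin n → ℝ := fun i => (∑ j, A i j) + 1 with hd
  have hd1 : ∀ i, 1 ≤ d i := fun i => by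
    have : 0 ≤ ∑ j, A i j := Finset.sum_nonneg fun j _ => hA0 i j
    simp only [hd]; linarith
  set s : Fin n → ℝ := fun i => Real.sqrt (d i) with hs
  have hspos : ∀ i, 0 < s i := fun i => Real.sqrt_pos.2 (by linarith [hd1 i])
  have hssq : ∀ i, s i * s i = d i := fun i => Real.mul_self_sqrt (by linarith [hd1 i])
  have hentry : ∀ i j, Ahat i j =
      (1 / s i) * (A i j + if i = j then 1 else 0) * (1 / s j) := by
    intro i j
    simp [hAhat, Matrix.mul_diagonal, Matrix.diagonal_mul, Matrix.add_apply,
      Matrix.one_apply, hs, hd]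
  constructor
  · ext i j
    rw [Matrix.transpose_apply, hentry, hentry, hAsym]
    by_cases h : i = j
    · subst h; ring
    · rw [if_neg h, if_neg (Ne.symm h)]; ring
  · intro mu x hx0 hx
    set y : Fin n → ℝ := fun i => x i / s i with hy
    have hxy : ∀ i, x i = s i * y i := fun i => by
      rw [hy]
      field_simp
      exact (mul_div_cancel_right₀ (x i) (hspos i).ne').symm
    have heig : ∀ i, ∑ j, Ahat i j * x j = mu * x i := by
      intro i
      have := congrFun hx i
      simpa [Matrix.mulVec, dotProduct, Pi.smul_apply, smul_eq_mul] using this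
    have key : ∀ i, ∑ j, (A i j + if i = j then 1 else 0) * (y i * y j)
        = mu * (d i * (y i * y i)) := by
      intro i
      have h2 : (s i * y i) * ∑ j, Ahat i j * x j = (s i * y i) * (mu * x i) := by
        rw [heig i]
      rw [Finset.mul_sum] at h2
      have h3 : ∀ j ∈ Finset.univ, (s i * y i) * (Ahat i j * x j)
          = (A i j + if i = j then 1 else 0) * (y i * y j) := by
        intro j _
        have hi : s i * (1 / s i) = 1 := by rw [mul_one_div]; exact div_self (hspos i).ne'
        have hj : s j * (1 / s j) = 1 := by rw [mul_one_div]; exact div_self (hspos j).ne'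
        calc (s i * y i) * (Ahat i j * x j)
            = (s i * (1 / s i)) * (s j * (1 / s j)) *
              ((A i j + if i = j then 1 else 0) * (y i * y j)) := by
              rw [hentry, hxy j]; ring
          _ = (A i j + if i = j then 1 else 0) * (y i * y j) := by
              rw [hi, hj]; ring
      rw [Finset.sum_congr rfl h3, hxy i] at h2
      rw [h2, show (s i * y i) * (mu * (s i * y i)) =
        mu * ((s i * s i) * (y i * y i)) from by ring, hssq i]
    -- abbreviations
    set T : ℝ := ∑ i, y i * y i with hT
    set P : ℝ := ∑ i, ∑ j, A i j * (y i * y j) with hP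
    set R : ℝ := ∑ i, ∑ j, A i j * (y i * y i) with hR
    set S : ℝ := ∑ i, d i * (y i * y i) with hSdef
    have hdelta : ∀ i, ∑ j, (A i j + if i = j then 1 else 0) * (y i * y j)
        = (∑ j, A i j * (y i * y j)) + y i * y i := by
      intro i
      have h4 : ∀ j ∈ Finset.univ, (A i j + if i = j then 1 else 0) * (y i * y j)
          = A i j * (y i * y j) + (if i = j then y i * y j else 0) := by
        intro j _
        by_cases h : i = j <;> simp [h] <;> ring
      rw [Finset.sum_congr rfl h4, Finset.sum_add_distrib, Finset.sum_ite_eq]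
      simp
    have hexp : P + T = mu * S := by
      have h9 : ∑ i, ∑ j, (A i j + if i = j then 1 else 0) * (y i * y j)
          = mu * ∑ i, d i * (y i * y i) := by
        rw [Finset.sum_congr rfl fun i (_ : i ∈ Finset.univ) => key i, ← Finset.mul_sum]
      rw [Finset.sum_congr rfl (fun i (_ : i ∈ Finset.univ) => hdelta i),
        Finset.sum_add_distrib] at h9
      rw [hP, hT, hSdef]
      exact h9
    have hswap : ∑ i, ∑ j, A i j * (y j * y j) = R := by
      rw [Finset.sum_comm, hR]
      apply Finset.sum_congr rfl
      intro j _
      rw [← Finset.sum_mul, ← Finset.sum_mul]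
      congr 1
      exact Finset.sum_congr rfl fun i _ => hAsym j i
    have h2R : ∑ i, ∑ j, A i j * (y i * y i + y j * y j) = 2 * R := by
      have : ∀ i ∈ Finset.univ, ∑ j, A i j * (y i * y i + y j * y j)
          = (∑ j, A i j * (y i * y i)) + ∑ j, A i j * (y j * y j) := by
        intro i _
        rw [← Finset.sum_add_distrib]
        exact Finset.sum_congr rfl fun j _ => by ring
      rw [Finset.sum_congr rfl this, Finset.sum_add_distrib, hswap, hR]
      ring
    have hPle : 2 * P ≤ 2 * R := by
      have h5 : ∑ i, ∑ j, 2 * (A i j * (y i * y j))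
          ≤ ∑ i, ∑ j, A i j * (y i * y i + y j * y j) := by
        refine Finset.sum_le_sum fun i _ => Finset.sum_le_sum fun j _ => ?_
        nlinarith [hA0 i j, sq_nonneg (y i - y j)]
      rw [h2R] at h5
      calc 2 * P = ∑ i, ∑ j, 2 * (A i j * (y i * y j)) := by
            rw [hP, Finset.mul_sum]
            exact Finset.sum_congr rfl fun i _ => Finset.mul_sum _ _ _
        _ ≤ 2 * R := h5
    have hPge : -(2 * R) ≤ 2 * P := by
      have h5 : ∑ i, ∑ j, -(A i j * (y i * y i + y j * y j))
          ≤ ∑ i, ∑ j, 2 * (A i j * (y i * y j)) := by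
        refine Finset.sum_le_sum fun i _ => Finset.sum_le_sum fun j _ => ?_
        nlinarith [hA0 i j, sq_nonneg (y i + y j)]
      have h6 : ∑ i, ∑ j, -(A i j * (y i * y i + y j * y j)) = -(2 * R) := by
        rw [← h2R]
        simp
      have h7 : ∑ i, ∑ j, 2 * (A i j * (y i * y j)) = 2 * P := by
        rw [hP, Finset.mul_sum]
        exact Finset.sum_congr rfl fun i _ => (Finset.mul_sum _ _ _).symm
      rw [h6, h7] at h5
      exact h5
    have hSRT : S = R + T := by
      rw [hSdef, hR, hT, ← Finset.sum_add_distrib]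
      apply Finset.sum_congr rfl
      intro i _
      rw [hd, ← Finset.sum_mul]
      ring
    have hR0 : 0 ≤ R :=
      Finset.sum_nonneg fun i _ => Finset.sum_nonneg fun j _ =>
        mul_nonneg (hA0 i j) (mul_self_nonneg _)
    have hT0 : 0 < T := by
      obtain ⟨i, hi⟩ := Function.ne_iff.1 hx0
      have hyi : y i ≠ 0 := by
        rw [hy]
        exact div_ne_zero hi (hspos i).ne'
      exact Finset.sum_pos' (fun j _ => mul_self_nonneg _)
        ⟨i, Finset.mem_univ i, mul_self_pos.2 hyi⟩
    have hS0 : 0 < S := by rw [hSRT]; linarith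
    constructor
    · by_contra h
      push_neg at h
      nlinarith [hexp, hPge, hSRT, hS0, hT0]
    · by_contra h
      push_neg at h
      nlinarith [hexp, hPle, hSRT, hS0, hT0]
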